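/- Let h, k be coprime positive integers and a, b positive integers. For every point (x,y) ∈ ℂ² with x^(a(h+k)) ≠ y^(bhk), the fiber of F_{h,k,a,b} over (x,y), i.e. the set {(z,w) ∈ ℂ² : h·z^k + k·w^h = (h+k)·x^a and z·w = y^b}, is finite and has exactly h+k elements; that is, F_{h,k,a,b} has degree h+k and is unbranched outside the curve x^(a(h+k)) = y^(bhk). -/

import Mathlib

open Polynomial

lemma aux_rootcount (p : Polynomial ℂ) (hp : p ≠ 0)
    (H : ∀ z : ℂ, p.eval z = 0 → p.derivative.eval z ≠ 0) :
    {z : ℂ | p.eval z = 0}.Finite ∧ {z : ℂ | p.eval z = 0}.ncard = p.natDegree := by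
  classical
  have hsep : p.Separable := by
    rw [Polynomial.separable_def, ← EuclideanDomain.gcd_isUnit_iff]
    by_contra hg
    have hg0 : EuclideanDomain.gcd p p.derivative ≠ 0 := by
      intro h0
      exact hp (EuclideanDomain.gcd_eq_zero_iff.mp h0).1
    have hdeg : 0 < (EuclideanDomain.gcd p p.derivative).degree :=
      Polynomial.degree_pos_of_ne_zero_of_nonunit hg0 hg
    obtain ⟨z, hz⟩ := Complex.exists_root hdeg
    exact H z
      (Polynomial.eval_eq_zero_of_dvd_of_eval_eq_zero (EuclideanDomain.gcd_dvd_left _ _) hz)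
      (Polynomial.eval_eq_zero_of_dvd_of_eval_eq_zero (EuclideanDomain.gcd_dvd_right _ _) hz)
  have hset : {z : ℂ | p.eval z = 0} = ↑p.roots.toFinset := by
    ext z
    simp [Polynomial.mem_roots, hp, Polynomial.IsRoot]
  constructor
  · rw [hset]; exact (p.roots.toFinset).finite_toSet
  · rw [hset, Set.ncard_coe_finset,
      Multiset.toFinset_card_of_nodup (Polynomial.nodup_roots hsep)]
    have := (IsAlgClosed.splits p).natDegree_eq_card_roots
    exact this.symm

theorem stmt_4 (h k a b : ℕ) (hh : 0 < h) (hk : 0 < k) (hcop : Nat.Coprime h k)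
    (ha : 0 < a) (hb : 0 < b)
    (x y : ℂ) (hxy : x ^ (a * (h + k)) ≠ y ^ (b * (h * k))) :
    {p : ℂ × ℂ | (h : ℂ) * p.1 ^ k + (k : ℂ) * p.2 ^ h = ((h : ℂ) + (k : ℂ)) * x ^ a ∧
        p.1 * p.2 = y ^ b}.Finite ∧
    {p : ℂ × ℂ | (h : ℂ) * p.1 ^ k + (k : ℂ) * p.2 ^ h = ((h : ℂ) + (k : ℂ)) * x ^ a ∧
        p.1 * p.2 = y ^ b}.ncard = h + k := by
  have hH : (h : ℂ) ≠ 0 := Nat.cast_ne_zero.mpr hh.ne'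
  have hK : (k : ℂ) ≠ 0 := Nat.cast_ne_zero.mpr hk.ne'
  have hHK : (h : ℂ) + (k : ℂ) ≠ 0 := by
    have : ((h + k : ℕ) : ℂ) ≠ 0 := Nat.cast_ne_zero.mpr (by omega)
    push_cast at this; exact this
  set d : ℂ := ((h : ℂ) + (k : ℂ)) * x ^ a with hd_def
  set c : ℂ := y ^ b with hc_def
  set S : Set (ℂ × ℂ) := {p : ℂ × ℂ | (h : ℂ) * p.1 ^ k + (k : ℂ) * p.2 ^ h = d ∧
      p.1 * p.2 = c} with hS_def
  by_cases hc : c = 0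
  · -- y^b = 0, so x ≠ 0
    have hy : y = 0 := by
      have := pow_eq_zero_iff hb.ne' |>.mp hc
      exact this
    have hx : x ≠ 0 := by
      intro hx0
      apply hxy
      rw [hx0, hy, zero_pow (by positivity), zero_pow (by positivity)]
    have hd : d ≠ 0 := mul_ne_zero hHK (pow_ne_zero _ hx)
    -- two polynomials
    set Q1 : Polynomial ℂ := C (h : ℂ) * X ^ k - C d with hQ1_def
    set Q2 : Polynomial ℂ := C (k : ℂ) * X ^ h - C d with hQ2_def
    have hQ1eval : ∀ z : ℂ, Q1.eval z = (h : ℂ) * z ^ k - d := by intro z; simp [hQ1_def]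
    have hQ2eval : ∀ z : ℂ, Q2.eval z = (k : ℂ) * z ^ h - d := by intro z; simp [hQ2_def]
    have hQ1deg : Q1.natDegree = k := by 
      rw [hQ1_def]; compute_degree!
      simpa [hk.ne'] using hH
    have hQ2deg : Q2.natDegree = h := by 
      rw [hQ2_def]; compute_degree!
      simpa [hh.ne'] using hK
    have hQ1ne : Q1 ≠ 0 := by
      intro h0; rw [h0] at hQ1deg; simp at hQ1deg; omega
    have hQ2ne : Q2 ≠ 0 := by
      intro h0; rw [h0] at hQ2deg; simp at hQ2deg; omega
    have hQ1H : ∀ z : ℂ, Q1.eval z = 0 → Q1.derivative.eval z ≠ 0 := by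
      intro z hz
      rw [hQ1eval, sub_eq_zero] at hz
      have hzne : z ≠ 0 := by
        intro h0; rw [h0, zero_pow hk.ne', mul_zero] at hz; exact hd hz.symm
      have : Q1.derivative.eval z = (h : ℂ) * ((k : ℕ) * z ^ (k - 1)) := by
        simp [hQ1_def, derivative_X_pow]
      rw [this]
      exact mul_ne_zero hH (mul_ne_zero hK (pow_ne_zero _ hzne))
    have hQ2H : ∀ z : ℂ, Q2.eval z = 0 → Q2.derivative.eval z ≠ 0 := by
      intro z hz
      rw [hQ2eval, sub_eq_zero] at hz
      have hzne : z ≠ 0 := by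
        intro h0; rw [h0, zero_pow hh.ne', mul_zero] at hz; exact hd hz.symm
      have : Q2.derivative.eval z = (k : ℂ) * ((h : ℕ) * z ^ (h - 1)) := by
        simp [hQ2_def, derivative_X_pow]
      rw [this]
      exact mul_ne_zero hK (mul_ne_zero hH (pow_ne_zero _ hzne))
    obtain ⟨hfin1, hcard1⟩ := aux_rootcount Q1 hQ1ne hQ1H
    obtain ⟨hfin2, hcard2⟩ := aux_rootcount Q2 hQ2ne hQ2H
    set R1 : Set ℂ := {z : ℂ | Q1.eval z = 0} with hR1_def
    set R2 : Set ℂ := {z : ℂ | Q2.eval z = 0} with hR2_def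
    have hSeq : S = ((fun z : ℂ => (z, (0 : ℂ))) '' R1) ∪ ((fun w : ℂ => ((0 : ℂ), w)) '' R2) := by
      ext ⟨z, w⟩
      simp only [hS_def, Set.mem_setOf_eq, Set.mem_union, Set.mem_image, hR1_def, hR2_def,
        hQ1eval, hQ2eval, Prod.mk.injEq]
      constructor
      · rintro ⟨heq, hzw⟩
        rw [hc] at hzw
        rcases mul_eq_zero.mp hzw with h0 | h0
        · right
          refine ⟨w, ?_, h0.symm, rfl⟩
          rw [h0, zero_pow hk.ne', mul_zero, zero_add] at heq
          rw [heq]; ring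
        · left
          refine ⟨z, ?_, rfl, h0.symm⟩
          rw [h0, zero_pow hh.ne', mul_zero, add_zero] at heq
          rw [heq]; ring
      · rintro (⟨z', hz', rfl, rfl⟩ | ⟨w', hw', rfl, rfl⟩)
        · rw [sub_eq_zero] at hz'
          constructor
          · rw [zero_pow hh.ne', mul_zero, add_zero, hz']
          · rw [mul_zero, hc]
        · rw [sub_eq_zero] at hw'
          constructor
          · rw [zero_pow hk.ne', mul_zero, zero_add, hw']
          · rw [zero_mul, hc]
    have hinj1 : Function.Injective (fun z : ℂ => (z, (0 : ℂ))) := fun a b hab =>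
      congrArg Prod.fst hab
    have hinj2 : Function.Injective (fun w : ℂ => ((0 : ℂ), w)) := fun a b hab =>
      congrArg Prod.snd hab
    have hdisj : Disjoint ((fun z : ℂ => (z, (0 : ℂ))) '' R1) ((fun w : ℂ => ((0 : ℂ), w)) '' R2) := by
      rw [Set.disjoint_left]
      rintro p ⟨z, hz, rfl⟩ ⟨w, hw, hpw⟩
      have hz0 : z = 0 := (congrArg Prod.fst hpw).symm
      rw [hz0, hR1_def, Set.mem_setOf_eq, hQ1eval, zero_pow hk.ne', mul_zero,
        zero_sub, neg_eq_zero] at hz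
      exact hd hz
    constructor
    · rw [hSeq]
      exact (hfin1.image _).union (hfin2.image _)
    · rw [hSeq, Set.ncard_union_eq hdisj (hfin1.image _) (hfin2.image _),
        Set.ncard_image_of_injective _ hinj1, Set.ncard_image_of_injective _ hinj2,
        hcard1, hcard2, hQ1deg, hQ2deg]
      omega
  · -- c ≠ 0
    set P : Polynomial ℂ := C (h : ℂ) * X ^ (h + k) - C d * X ^ h + C ((k : ℂ) * c ^ h)
      with hP_def
    have hPeval : ∀ z : ℂ, P.eval z = (h : ℂ) * z ^ (h + k) - d * z ^ h + (k : ℂ) * c ^ h := by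
      intro z; simp [hP_def]
    have hPdeg : P.natDegree = h + k := by 
      rw [hP_def]; compute_degree!
      simpa [hk.ne', hh.ne'] using hH
    have hPne : P ≠ 0 := by
      intro h0; rw [h0] at hPdeg; simp at hPdeg; omega
    have hPH : ∀ z : ℂ, P.eval z = 0 → P.derivative.eval z ≠ 0 := by
      intro z hz hz'
      rw [hPeval] at hz
      have hzne : z ≠ 0 := by
        intro h0
        rw [h0, zero_pow (by omega : h + k ≠ 0), zero_pow hh.ne', mul_zero, mul_zero,
          sub_zero, zero_add] at hz
        exact mul_ne_zero hK (pow_ne_zero _ hc) hz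
      have hderiv : P.derivative.eval z =
          (h : ℂ) * (((h + k : ℕ) : ℂ) * z ^ (h + k - 1)) - d * (((h : ℕ) : ℂ) * z ^ (h - 1)) := by
        simp only [hP_def, derivative_add, derivative_sub, derivative_C_mul, derivative_X_pow,
          derivative_C, add_zero, eval_sub, eval_mul, eval_pow, eval_C, eval_X, eval_natCast]
      rw [hderiv] at hz'
      have hpow1 : z ^ (h + k - 1) = z ^ (h - 1) * z ^ k := by
        rw [← pow_add]; congr 1; omega
      have hpow2 : z ^ (h + k) = z ^ h * z ^ k := by rw [← pow_add]
      rw [hpow1] at hz'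
      have e1 : z ^ k = x ^ a := by
        have key : ((h : ℂ) * ((h : ℂ) + (k : ℂ)) * z ^ (h - 1)) * z ^ k
            = ((h : ℂ) * ((h : ℂ) + (k : ℂ)) * z ^ (h - 1)) * x ^ a := by
          rw [hd_def] at hz'
          push_cast at hz'
          linear_combination hz'
        exact mul_left_cancel₀ (mul_ne_zero (mul_ne_zero hH hHK) (pow_ne_zero _ hzne)) key
      have e2 : x ^ a * z ^ h = c ^ h := by
        have key : (k : ℂ) * (x ^ a * z ^ h) = (k : ℂ) * c ^ h := by
          rw [hpow2, e1, hd_def] at hz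
          linear_combination -hz
        exact mul_left_cancel₀ hK key
      apply hxy
      calc x ^ (a * (h + k)) = (x ^ a) ^ (h + k) := by rw [pow_mul]
        _ = (x ^ a) ^ k * (x ^ a) ^ h := by rw [← pow_add, Nat.add_comm]
        _ = (x ^ a) ^ k * (z ^ k) ^ h := by rw [e1]
        _ = (x ^ a) ^ k * (z ^ h) ^ k := by rw [pow_right_comm z k h]
        _ = (x ^ a * z ^ h) ^ k := by rw [mul_pow]
        _ = (c ^ h) ^ k := by rw [e2]
        _ = y ^ (b * (h * k)) := by rw [hc_def, ← pow_mul, ← pow_mul]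
    obtain ⟨hfin, hcard⟩ := aux_rootcount P hPne hPH
    set R : Set ℂ := {z : ℂ | P.eval z = 0} with hR_def
    have hSeq : S = (fun z : ℂ => (z, c * z⁻¹)) '' R := by
      ext ⟨z, w⟩
      simp only [hS_def, Set.mem_setOf_eq, Set.mem_image, hR_def, hPeval, Prod.mk.injEq]
      constructor
      · rintro ⟨heq, hzw⟩
        have hzne : z ≠ 0 := left_ne_zero_of_mul (hzw ▸ hc)
        refine ⟨z, ?_, rfl, ?_⟩
        · have hpow2 : z ^ (h + k) = z ^ h * z ^ k := by rw [← pow_add]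
          have hch : c ^ h = z ^ h * w ^ h := by rw [← mul_pow, hzw]
          rw [hpow2, hch]
          linear_combination (z ^ h) * heq
        · field_simp
          linear_combination -hzw
      · rintro ⟨z', hz', rfl, rfl⟩
        have hzne : z' ≠ 0 := by
          intro h0
          rw [h0, zero_pow (by omega : h + k ≠ 0), zero_pow hh.ne', mul_zero, mul_zero,
            sub_zero, zero_add] at hz'
          exact mul_ne_zero hK (pow_ne_zero _ hc) hz'
        have hzh : z' ^ h ≠ 0 := pow_ne_zero _ hzne
        constructor
        · have hpow2 : z' ^ (h + k) = z' ^ h * z' ^ k := by rw [← pow_add]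
          rw [hpow2] at hz'
          have hwpow : (c * z'⁻¹) ^ h = c ^ h * (z' ^ h)⁻¹ := by rw [mul_pow, inv_pow]
          rw [hwpow]
          apply mul_right_cancel₀ hzh
          have hinv : (z' ^ h)⁻¹ * z' ^ h = 1 := inv_mul_cancel₀ hzh
          have expand : ((h : ℂ) * z' ^ k + (k : ℂ) * (c ^ h * (z' ^ h)⁻¹)) * z' ^ h
              = (h : ℂ) * z' ^ k * z' ^ h + (k : ℂ) * c ^ h := by
            linear_combination ((k : ℂ) * c ^ h) * hinv
          rw [expand]
          linear_combination hz'
        · field_simp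
    have hinj : Function.Injective (fun z : ℂ => (z, c * z⁻¹)) := fun a b hab =>
      congrArg Prod.fst hab
    constructor
    · rw [hSeq]; exact hfin.image _
    · rw [hSeq, Set.ncard_image_of_injective _ hinj, hcard, hPdeg]
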